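/- arXiv:2010.07012 — 3 statements merged into one kernel-verified Lean document; each statement's English description precedes it below -/
import Mathlib

section
/- Let ρ ∈ C^K be M-sparse with ‖ρ‖_∞ ≤ 1 and let a_1,…,a_K ∈ C^N be unit vectors with |⟨a_k, a_l⟩| ≤ Δ/√N for k ≠ l. Define e = Σ_{k≠l} conj(ρ_k) ρ_l (conj(a_k) ⊗ a_l) ∈ C^{N²} and χ_k = |ρ_k|². If M ≤ α√N, then ‖e‖_2 ≤ (1 + Δα) ‖χ‖_1, where ‖χ‖_1 = Σ_k |ρ_k|². -/
open Finset

set_option maxHeartbeats 1000000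

/-- If ρ is M-sparse with ‖ρ‖_∞ ≤ 1, the a_k are unit vectors with coherence
|⟨a_k,a_l⟩| ≤ Δ/√N for k ≠ l, and M ≤ α√N, then the off-diagonal vector
e = Σ_{k≠l} conj(ρ_k) ρ_l (conj(a_k) ⊗ a_l) satisfies ‖e‖₂ ≤ (1 + Δα)‖χ‖₁,
where ‖χ‖₁ = Σ_k |ρ_k|². -/
theorem stmt11 (N K M : ℕ) (hN : 0 < N) (Δ α : ℝ) (hΔ : 0 < Δ) (hα : 0 < α)
    (ρ : Fin K → ℂ)
    (hsparse : (Finset.univ.filter (fun k => ρ k ≠ 0)).card ≤ M)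
    (hρinf : ∀ k, ‖ρ k‖ ≤ 1)
    (a : Fin K → Fin N → ℂ)
    (hunit : ∀ k, ∑ i : Fin N, ‖a k i‖ ^ 2 = 1)
    (hcoh : ∀ k l : Fin K, k ≠ l →
      ‖∑ i : Fin N, (starRingEnd ℂ) (a k i) * a l i‖ ≤ Δ / Real.sqrt N)
    (hM : (M : ℝ) ≤ α * Real.sqrt N) :
    Real.sqrt (∑ p : Fin N × Fin N,
        ‖∑ k : Fin K, ∑ l ∈ Finset.univ.filter (fun l => l ≠ k),
            (starRingEnd ℂ) (ρ k) * ρ l * ((starRingEnd ℂ) (a k p.1) * a l p.2)‖ ^ 2)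
      ≤ (1 + Δ * α) * ∑ k : Fin K, ‖ρ k‖ ^ 2 := by
  classical
  have hNpos : (0:ℝ) < Real.sqrt N := Real.sqrt_pos.2 (by exact_mod_cast hN)
  set μ : ℝ := Δ / Real.sqrt N with hμdef
  have hμ0 : 0 ≤ μ := le_of_lt (div_pos hΔ hNpos)
  set r : Fin K → ℝ := fun k => ‖ρ k‖ with hrdef
  have hr0 : ∀ k, 0 ≤ r k := fun k => norm_nonneg _
  set S2 : ℝ := ∑ k, r k ^ 2 with hS2def
  set S1 : ℝ := ∑ k, r k with hS1def
  have hS2nonneg : 0 ≤ S2 := Finset.sum_nonneg fun k _ => sq_nonneg _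
  -- inner products of the frame vectors
  set A : Fin K → Fin K → ℂ := fun k m => ∑ i, (starRingEnd ℂ) (a k i) * a m i with hAdef
  have hAdiag : ∀ k, A k k = 1 := by
    intro k
    have h1 : ∀ i : Fin N, (starRingEnd ℂ) (a k i) * a k i = ((‖a k i‖ ^ 2 : ℝ) : ℂ) := by
      intro i
      rw [mul_comm, Complex.mul_conj, Complex.normSq_eq_norm_sq]
    simp only [hAdef, h1]
    rw [← Complex.ofReal_sum, hunit k, Complex.ofReal_one]
  set g : Fin K → Fin K → ℝ := fun k m => if k = m then 1 else μ with hgdef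
  have hg0 : ∀ k m, 0 ≤ g k m := by
    intro k m; simp only [hgdef]; split
    · norm_num
    · exact hμ0
  have hAbound : ∀ k m, ‖A k m‖ ≤ g k m := by
    intro k m
    simp only [hgdef]
    by_cases h : k = m
    · subst h; rw [hAdiag k, if_pos rfl, norm_one]
    · rw [if_neg h]
      have := hcoh k m h
      exact this
  set c : Fin K × Fin K → ℂ := fun q => (starRingEnd ℂ) (ρ q.1) * ρ q.2 with hcdef
  set b : Fin K × Fin K → Fin N × Fin N → ℂ :=
    fun q p => (starRingEnd ℂ) (a q.1 p.1) * a q.2 p.2 with hbdef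
  set T : Finset (Fin K × Fin K) := univ.filter (fun q => q.2 ≠ q.1) with hTdef
  set e : Fin N × Fin N → ℂ := fun p => ∑ q ∈ T, c q * b q p with hedef
  have he : ∀ p : Fin N × Fin N,
      (∑ k : Fin K, ∑ l ∈ Finset.univ.filter (fun l => l ≠ k),
        (starRingEnd ℂ) (ρ k) * ρ l * ((starRingEnd ℂ) (a k p.1) * a l p.2)) = e p := by
    intro p
    simp only [hedef, hTdef, hcdef, hbdef, Finset.sum_filter, Fintype.sum_prod_type]
  -- factorization of the Gram inner products
  have hfac : ∀ q q' : Fin K × Fin K,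
      (∑ p : Fin N × Fin N, b q p * (starRingEnd ℂ) (b q' p))
        = A q.1 q'.1 * (starRingEnd ℂ) (A q.2 q'.2) := by
    intro q q'
    have h2 : (starRingEnd ℂ) (A q.2 q'.2) = ∑ j, a q.2 j * (starRingEnd ℂ) (a q'.2 j) := by
      simp only [hAdef, map_sum, map_mul, Complex.conj_conj]
    rw [h2]
    simp only [hAdef]
    rw [Fintype.sum_prod_type, Finset.sum_mul_sum]
    refine Finset.sum_congr rfl fun i _ => Finset.sum_congr rfl fun j _ => ?_
    simp only [hbdef, map_mul, Complex.conj_conj]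
    ring
  -- expansion of the squared norm
  have hexpand : ∑ p : Fin N × Fin N, ‖e p‖ ^ 2
      = (∑ q ∈ T, ∑ q' ∈ T,
          c q * (starRingEnd ℂ) (c q') * (A q.1 q'.1 * (starRingEnd ℂ) (A q.2 q'.2))).re := by
    have h1 : ∀ p : Fin N × Fin N, (‖e p‖ ^ 2 : ℝ) = (e p * (starRingEnd ℂ) (e p)).re := by
      intro p
      rw [Complex.mul_conj, Complex.normSq_eq_norm_sq, Complex.ofReal_re]
    have h2 : ∀ p : Fin N × Fin N, e p * (starRingEnd ℂ) (e p)
        = ∑ q ∈ T, ∑ q' ∈ T,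
            c q * (starRingEnd ℂ) (c q') * (b q p * (starRingEnd ℂ) (b q' p)) := by
      intro p
      simp only [hedef, map_sum, Finset.sum_mul_sum, map_mul]
      exact Finset.sum_congr rfl fun q _ => Finset.sum_congr rfl fun q' _ => by ring
    simp only [h1, h2]
    rw [← Complex.re_sum]
    congr 1
    rw [Finset.sum_comm]
    refine Finset.sum_congr rfl fun q _ => ?_
    rw [Finset.sum_comm]
    refine Finset.sum_congr rfl fun q' _ => ?_
    rw [← Finset.mul_sum, hfac q q']
  -- bound the real part termwise
  set f : Fin K → Fin K → ℝ := fun k m => r k * r m * g k m with hfdef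
  have hf0 : ∀ k m, 0 ≤ f k m := fun k m => by
    simp only [hfdef]; exact mul_nonneg (mul_nonneg (hr0 k) (hr0 m)) (hg0 k m)
  have hbound : (∑ q ∈ T, ∑ q' ∈ T,
      c q * (starRingEnd ℂ) (c q') * (A q.1 q'.1 * (starRingEnd ℂ) (A q.2 q'.2))).re
      ≤ ∑ q ∈ T, ∑ q' ∈ T, f q.1 q'.1 * f q.2 q'.2 := by
    refine le_trans (Complex.re_le_norm _) ?_
    refine le_trans (norm_sum_le _ _) ?_
    refine Finset.sum_le_sum fun q _ => ?_
    refine le_trans (norm_sum_le _ _) ?_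
    refine Finset.sum_le_sum fun q' _ => ?_
    have habs : ‖c q * (starRingEnd ℂ) (c q')
          * (A q.1 q'.1 * (starRingEnd ℂ) (A q.2 q'.2))‖
        = r q.1 * r q.2 * (r q'.1 * r q'.2)
          * (‖A q.1 q'.1‖ * ‖A q.2 q'.2‖) := by
      simp only [hcdef, norm_mul, Complex.norm_conj, hrdef]
      try ring
    rw [habs]
    have hA1 := hAbound q.1 q'.1
    have hA2 := hAbound q.2 q'.2
    have hAA : ‖A q.1 q'.1‖ * ‖A q.2 q'.2‖
        ≤ g q.1 q'.1 * g q.2 q'.2 :=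
      mul_le_mul hA1 hA2 (norm_nonneg _) (hg0 _ _)
    have hP : 0 ≤ r q.1 * r q.2 * (r q'.1 * r q'.2) := by
      have := hr0 q.1; have := hr0 q.2; have := hr0 q'.1; have := hr0 q'.2; positivity
    calc r q.1 * r q.2 * (r q'.1 * r q'.2)
          * (‖A q.1 q'.1‖ * ‖A q.2 q'.2‖)
        ≤ r q.1 * r q.2 * (r q'.1 * r q'.2) * (g q.1 q'.1 * g q.2 q'.2) :=
          mul_le_mul_of_nonneg_left hAA hP
      _ = f q.1 q'.1 * f q.2 q'.2 := by simp only [hfdef]; ring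
  -- product factorization over all pairs
  have hprod : ∀ u v : Fin K → ℝ,
      (∑ q : Fin K × Fin K, u q.1 * v q.2) = (∑ k, u k) * (∑ k, v k) := by
    intro u v
    rw [Fintype.sum_prod_type, Finset.sum_mul_sum]
  set B : ℝ := ∑ k, ∑ m, f k m with hBdef
  have hBnonneg : 0 ≤ B :=
    Finset.sum_nonneg fun k _ => Finset.sum_nonneg fun m _ => hf0 k m
  have hfactor : ∑ q ∈ T, ∑ q' ∈ T, f q.1 q'.1 * f q.2 q'.2 ≤ B * B := by
    have step1 : ∑ q ∈ T, ∑ q' ∈ T, f q.1 q'.1 * f q.2 q'.2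
        ≤ ∑ q : Fin K × Fin K, ∑ q' : Fin K × Fin K, f q.1 q'.1 * f q.2 q'.2 := by
      refine le_trans (Finset.sum_le_sum fun q _ =>
        Finset.sum_le_sum_of_subset_of_nonneg (Finset.filter_subset _ _)
          (fun q' _ _ => mul_nonneg (hf0 _ _) (hf0 _ _))) ?_
      exact Finset.sum_le_sum_of_subset_of_nonneg (Finset.filter_subset _ _)
        (fun q _ _ => Finset.sum_nonneg fun q' _ => mul_nonneg (hf0 _ _) (hf0 _ _))
    refine le_trans step1 (le_of_eq ?_)
    have inner1 : ∀ q : Fin K × Fin K,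
        (∑ q' : Fin K × Fin K, f q.1 q'.1 * f q.2 q'.2)
          = (∑ m, f q.1 m) * (∑ n, f q.2 n) := fun q => hprod _ _
    simp only [inner1]
    rw [hprod (fun k => ∑ m, f k m) (fun k => ∑ m, f k m), hBdef]
  -- bound B
  have hB : B ≤ S2 + μ * S1 ^ 2 := by
    have hterm : ∀ k m : Fin K,
        f k m ≤ (if k = m then r k ^ 2 else 0) + μ * (r k * r m) := by
      intro k m
      by_cases h : k = m
      · subst h
        rw [if_pos rfl]
        have h0 : f k k = r k * r k := by
          simp only [hfdef, hgdef, eq_self_iff_true, if_true]; ring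
        rw [h0]
        nlinarith [hr0 k, mul_nonneg hμ0 (mul_nonneg (hr0 k) (hr0 k))]
      · rw [if_neg h]
        have h0 : f k m = r k * r m * μ := by
          simp only [hfdef, hgdef, if_neg h]
        rw [h0]
        have h2 : r k * r m * μ = μ * (r k * r m) := by ring
        linarith
    calc B ≤ ∑ k, ∑ m, ((if k = m then r k ^ 2 else 0) + μ * (r k * r m)) := by
          rw [hBdef]
          exact Finset.sum_le_sum fun k _ => Finset.sum_le_sum fun m _ => hterm k m
      _ = S2 + μ * S1 ^ 2 := by
          simp only [Finset.sum_add_distrib]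
          congr 1
          · rw [hS2def]
            refine Finset.sum_congr rfl fun k _ => ?_
            simp [Finset.sum_ite_eq]
          · rw [hS1def, sq, Finset.sum_mul_sum, Finset.mul_sum]
            refine Finset.sum_congr rfl fun k _ => ?_
            rw [Finset.mul_sum]
  -- key bound on the squared norm
  have hkey : ∑ p : Fin N × Fin N, ‖e p‖ ^ 2 ≤ (S2 + μ * S1 ^ 2) ^ 2 := by
    rw [hexpand]
    refine le_trans hbound (le_trans hfactor ?_)
    have h' : 0 ≤ S2 + μ * S1 ^ 2 := by positivity
    nlinarith [hBnonneg, hB]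
  -- sparsity: S1^2 ≤ M * S2
  have hsupp : S1 ^ 2 ≤ (M : ℝ) * S2 := by
    set supp : Finset (Fin K) := Finset.univ.filter (fun k => ρ k ≠ 0) with hsuppdef
    have h1 : S1 = ∑ k ∈ supp, r k := by
      rw [hS1def, hsuppdef]
      exact (Finset.sum_filter_of_ne fun k _ h => by
        simpa [hrdef] using (norm_ne_zero_iff).mp h).symm
    have h2 : (∑ k ∈ supp, r k) ^ 2 ≤ (supp.card : ℝ) * ∑ k ∈ supp, r k ^ 2 :=
      sq_sum_le_card_mul_sum_sq
    have h3 : ∑ k ∈ supp, r k ^ 2 ≤ S2 :=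
      Finset.sum_le_sum_of_subset_of_nonneg (Finset.filter_subset _ _)
        (fun k _ _ => sq_nonneg _)
    have h4 : (supp.card : ℝ) ≤ (M : ℝ) := by exact_mod_cast hsparse
    calc S1 ^ 2 = (∑ k ∈ supp, r k) ^ 2 := by rw [h1]
      _ ≤ (supp.card : ℝ) * ∑ k ∈ supp, r k ^ 2 := h2
      _ ≤ (M : ℝ) * S2 := by
          refine mul_le_mul h4 h3 (Finset.sum_nonneg fun k _ => sq_nonneg _) ?_
          exact Nat.cast_nonneg _
  have hμM : μ * (M : ℝ) ≤ Δ * α := by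
    have h1 : μ * (M : ℝ) ≤ μ * (α * Real.sqrt N) := mul_le_mul_of_nonneg_left hM hμ0
    have h2 : μ * (α * Real.sqrt N) = Δ * α := by
      rw [hμdef]; field_simp
    linarith
  have hμS1 : μ * S1 ^ 2 ≤ Δ * α * S2 := by
    calc μ * S1 ^ 2 ≤ μ * ((M : ℝ) * S2) := mul_le_mul_of_nonneg_left hsupp hμ0
      _ = (μ * (M : ℝ)) * S2 := by ring
      _ ≤ Δ * α * S2 := mul_le_mul_of_nonneg_right hμM hS2nonneg
  -- final chain
  have hrw : (∑ p : Fin N × Fin N,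
      ‖∑ k : Fin K, ∑ l ∈ Finset.univ.filter (fun l => l ≠ k),
          (starRingEnd ℂ) (ρ k) * ρ l * ((starRingEnd ℂ) (a k p.1) * a l p.2)‖ ^ 2)
      = ∑ p : Fin N × Fin N, ‖e p‖ ^ 2 :=
    Finset.sum_congr rfl fun p _ => by rw [he p]
  rw [hrw]
  have h5 : Real.sqrt (∑ p : Fin N × Fin N, ‖e p‖ ^ 2) ≤ S2 + μ * S1 ^ 2 := by
    have h6 : S2 + μ * S1 ^ 2 = Real.sqrt ((S2 + μ * S1 ^ 2) ^ 2) :=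
      (Real.sqrt_sq (by positivity)).symm
    rw [h6]
    exact Real.sqrt_le_sqrt hkey
  have h7 : S2 + Δ * α * S2 = (1 + Δ * α) * S2 := by ring
  linarith
end

section
/- Under the same assumptions (ρ M-sparse, ‖ρ‖_∞ ≤ 1, unit columns a_k with coherence |⟨a_k,a_l⟩| ≤ Δ/√N for k≠l, e = Σ_{k≠l} conj(ρ_k)ρ_l (conj(a_k)⊗a_l)), for any index m with ρ_m = 0 (m not in the support), setting t_m = conj(a_m) ⊗ a_m, one has |⟨t_m, e⟩| ≤ Δ² M² / N. -/
open Finset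

/-- Under the assumptions of the dimension-reduction setup, for any m outside the
support of ρ, with t_m = conj(a_m) ⊗ a_m, one has |⟨t_m, e⟩| ≤ Δ²M²/N. -/
theorem stmt12 (N K M : ℕ) (hN : 0 < N) (Δ : ℝ) (hΔ : 0 < Δ)
    (ρ : Fin K → ℂ)
    (hsparse : (Finset.univ.filter (fun k => ρ k ≠ 0)).card ≤ M)
    (hρinf : ∀ k, ‖ρ k‖ ≤ 1)
    (a : Fin K → Fin N → ℂ)
    (hunit : ∀ k, ∑ i : Fin N, ‖a k i‖ ^ 2 = 1)
    (hcoh : ∀ k l : Fin K, k ≠ l →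
      ‖∑ i : Fin N, (starRingEnd ℂ) (a k i) * a l i‖ ≤ Δ / Real.sqrt N)
    (m : Fin K) (hm : ρ m = 0) :
    ‖∑ p : Fin N × Fin N,
        (starRingEnd ℂ) ((starRingEnd ℂ) (a m p.1) * a m p.2)
          * (∑ k : Fin K, ∑ l ∈ Finset.univ.filter (fun l => l ≠ k),
              (starRingEnd ℂ) (ρ k) * ρ l * ((starRingEnd ℂ) (a k p.1) * a l p.2))‖
      ≤ Δ ^ 2 * M ^ 2 / N := by
  have hNR : (0:ℝ) < N := by exact_mod_cast hN
  set c : Fin K → Fin K → ℂ := fun k l => ∑ i, (starRingEnd ℂ) (a k i) * a l i with hc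
  -- rewrite the LHS
  have key : (∑ p : Fin N × Fin N,
        (starRingEnd ℂ) ((starRingEnd ℂ) (a m p.1) * a m p.2)
          * (∑ k : Fin K, ∑ l ∈ Finset.univ.filter (fun l => l ≠ k),
              (starRingEnd ℂ) (ρ k) * ρ l * ((starRingEnd ℂ) (a k p.1) * a l p.2)))
      = ∑ k : Fin K, ∑ l ∈ Finset.univ.filter (fun l => l ≠ k),
          (starRingEnd ℂ) (ρ k) * ρ l * ((starRingEnd ℂ) (c m k) * c m l) := by
    simp only [Finset.mul_sum]
    rw [Finset.sum_comm]
    refine Finset.sum_congr rfl fun k _ => ?_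
    rw [Finset.sum_comm]
    refine Finset.sum_congr rfl fun l _ => ?_
    have : ((starRingEnd ℂ) (c m k) * c m l)
        = ∑ p : Fin N × Fin N,
            (a m p.1 * (starRingEnd ℂ) (a k p.1)) * ((starRingEnd ℂ) (a m p.2) * a l p.2) := by
      rw [Fintype.sum_prod_type]
      simp only [← Finset.sum_mul, ← Finset.mul_sum, hc, map_sum, map_mul,
        Complex.conj_conj]
    rw [this, Finset.mul_sum]
    refine Finset.sum_congr rfl fun p _ => ?_
    simp only [map_mul, Complex.conj_conj]
    ring
  rw [key]
  -- bound each term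
  have hbound : ∀ k ∈ (Finset.univ : Finset (Fin K)),
      ∀ l ∈ Finset.univ.filter (fun l => l ≠ k),
      ‖(starRingEnd ℂ) (ρ k) * ρ l * ((starRingEnd ℂ) (c m k) * c m l)‖
        ≤ (if ρ k ≠ 0 then (1:ℝ) else 0) * (if ρ l ≠ 0 then (1:ℝ) else 0) * (Δ^2 / N) := by
    intro k _ l _
    by_cases hk : ρ k = 0
    · simp [hk]
    by_cases hl : ρ l = 0
    · simp [hl]
    have hkm : m ≠ k := fun h => hk (h ▸ hm)
    have hlm : m ≠ l := fun h => hl (h ▸ hm)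
    simp only [hk, hl, if_pos, ne_eq, not_false_eq_true, if_true, one_mul]
    have h1 : ‖(starRingEnd ℂ) (ρ k)‖ ≤ 1 := by
      rw [RCLike.norm_conj]; exact hρinf k
    have h2 : ‖ρ l‖ ≤ 1 := hρinf l
    have h3 : ‖(starRingEnd ℂ) (c m k)‖ ≤ Δ / Real.sqrt N := by
      rw [RCLike.norm_conj]; exact hcoh m k hkm
    have h4 : ‖c m l‖ ≤ Δ / Real.sqrt N := hcoh m l hlm
    have hΔN : (0:ℝ) ≤ Δ / Real.sqrt N := by positivity
    calc ‖(starRingEnd ℂ) (ρ k) * ρ l * ((starRingEnd ℂ) (c m k) * c m l)‖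
        = ‖(starRingEnd ℂ) (ρ k)‖ * ‖ρ l‖ * (‖(starRingEnd ℂ) (c m k)‖ * ‖c m l‖) := by
          simp [norm_mul]
      _ ≤ 1 * 1 * ((Δ / Real.sqrt N) * (Δ / Real.sqrt N)) := by
          gcongr
      _ = Δ^2 / N := by
          rw [div_mul_div_comm, Real.mul_self_sqrt hNR.le]; ring
  calc ‖∑ k : Fin K, ∑ l ∈ Finset.univ.filter (fun l => l ≠ k),
          (starRingEnd ℂ) (ρ k) * ρ l * ((starRingEnd ℂ) (c m k) * c m l)‖
      ≤ ∑ k : Fin K, ∑ l ∈ Finset.univ.filter (fun l => l ≠ k),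
          ‖(starRingEnd ℂ) (ρ k) * ρ l * ((starRingEnd ℂ) (c m k) * c m l)‖ := by
        refine (norm_sum_le _ _).trans (Finset.sum_le_sum fun k _ => norm_sum_le _ _)
    _ ≤ ∑ k : Fin K, ∑ l ∈ Finset.univ.filter (fun l => l ≠ k),
          (if ρ k ≠ 0 then (1:ℝ) else 0) * (if ρ l ≠ 0 then (1:ℝ) else 0) * (Δ^2 / N) := by
        exact Finset.sum_le_sum fun k hk => Finset.sum_le_sum (hbound k hk)
    _ ≤ ∑ k : Fin K, ∑ l : Fin K,
          (if ρ k ≠ 0 then (1:ℝ) else 0) * (if ρ l ≠ 0 then (1:ℝ) else 0) * (Δ^2 / N) := by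
        refine Finset.sum_le_sum fun k _ => Finset.sum_le_sum_of_subset_of_nonneg
          (Finset.filter_subset _ _) (fun l _ _ => by positivity)
    _ = ((Finset.univ.filter (fun k => ρ k ≠ 0)).card : ℝ)^2 * (Δ^2 / N) := by
        simp only [← Finset.sum_mul, ← Finset.mul_sum, Finset.sum_boole]
        push_cast
        ring
    _ ≤ (M:ℝ)^2 * (Δ^2 / N) := by
        gcongr
        all_goals exact_mod_cast hsparse
    _ = Δ ^ 2 * M ^ 2 / N := by ring
end

section
/- Under the same assumptions, for any index m in the support of ρ, with t_m = conj(a_m)⊗a_m, one has |⟨t_m, e⟩| ≤ (2ΔM/√N + Δ²M²/N) ‖ρ‖_∞², where e = Σ_{k≠l} conj(ρ_k)ρ_l (conj(a_k)⊗a_l). -/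
open Finset

/-- Under the same assumptions, for any m in the support of ρ, with
t_m = conj(a_m) ⊗ a_m, one has |⟨t_m, e⟩| ≤ (2ΔM/√N + Δ²M²/N)‖ρ‖_∞². -/
theorem stmt13 (N K M : ℕ) (hN : 0 < N) (hK : 0 < K) (Δ : ℝ) (hΔ : 0 < Δ)
    (ρ : Fin K → ℂ)
    (hsparse : (Finset.univ.filter (fun k => ρ k ≠ 0)).card ≤ M)
    (hρinf : ∀ k, ‖ρ k‖ ≤ 1)
    (a : Fin K → Fin N → ℂ)
    (hunit : ∀ k, ∑ i : Fin N, ‖a k i‖ ^ 2 = 1)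
    (hcoh : ∀ k l : Fin K, k ≠ l →
      ‖∑ i : Fin N, (starRingEnd ℂ) (a k i) * a l i‖ ≤ Δ / Real.sqrt N)
    (m : Fin K) (hm : ρ m ≠ 0) :
    haveI : Nonempty (Fin K) := Fin.pos_iff_nonempty.mp hK
    ‖∑ p : Fin N × Fin N,
        (starRingEnd ℂ) ((starRingEnd ℂ) (a m p.1) * a m p.2)
          * (∑ k : Fin K, ∑ l ∈ Finset.univ.filter (fun l => l ≠ k),
              (starRingEnd ℂ) (ρ k) * ρ l * ((starRingEnd ℂ) (a k p.1) * a l p.2))‖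
      ≤ (2 * Δ * M / Real.sqrt N + Δ ^ 2 * M ^ 2 / N)
          * (⨆ k : Fin K, ‖ρ k‖) ^ 2 := by
  haveI : Nonempty (Fin K) := Fin.pos_iff_nonempty.mp hK
  set A : Fin K → ℂ := fun k => ∑ i, a m i * (starRingEnd ℂ) (a k i) with hAdef
  set B : Fin K → ℂ := fun l => ∑ i, (starRingEnd ℂ) (a m i) * a l i with hBdef
  set S : ℝ := ⨆ k : Fin K, ‖ρ k‖ with hSdef
  have hsqrtN : 0 < Real.sqrt N := Real.sqrt_pos.mpr (by exact_mod_cast hN)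
  set D : ℝ := Δ / Real.sqrt N with hDdef
  have hD : 0 ≤ D := div_nonneg hΔ.le hsqrtN.le
  set g : Fin K → ℝ := fun k => if k = m then 1 else D with hgdef
  have hg0 : ∀ k, 0 ≤ g k := fun k => by by_cases h : k = m <;> simp [hgdef, h, hD]
  have hbdd : BddAbove (Set.range fun k => ‖ρ k‖) :=
    ⟨1, fun x hx => by obtain ⟨k, rfl⟩ := hx; exact hρinf k⟩
  have hS : ∀ k, ‖ρ k‖ ≤ S := fun k => by
    exact le_ciSup hbdd k
  have hS0 : 0 ≤ S := le_trans (norm_nonneg (ρ m)) (hS m)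
  have hA : ∀ k, ‖A k‖ ≤ g k := by
    intro k
    by_cases h : k = m
    · subst h
      have : A k = ((∑ i, ‖a k i‖ ^ 2 : ℝ) : ℂ) := by
        push_cast
        refine Finset.sum_congr rfl fun i _ => ?_
        rw [Complex.mul_conj, ← Complex.sq_norm]
        push_cast; ring
      rw [this, hunit k]
      simp [hgdef]
    · have : A k = ∑ i, (starRingEnd ℂ) (a k i) * a m i :=
        Finset.sum_congr rfl fun i _ => mul_comm _ _
      rw [this]
      simpa [hgdef, h] using hcoh k m h
  have hB : ∀ l, ‖B l‖ ≤ g l := by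
    intro l
    by_cases h : l = m
    · subst h
      have : B l = ((∑ i, ‖a l i‖ ^ 2 : ℝ) : ℂ) := by
        push_cast
        refine Finset.sum_congr rfl fun i _ => ?_
        rw [mul_comm, Complex.mul_conj, ← Complex.sq_norm]
        push_cast; ring
      rw [this, hunit l]
      simp [hgdef]
    · simpa [hgdef, h] using hcoh m l (fun e => h e.symm)
  -- key rearrangement
  have key : (∑ p : Fin N × Fin N,
        (starRingEnd ℂ) ((starRingEnd ℂ) (a m p.1) * a m p.2)
          * (∑ k : Fin K, ∑ l ∈ Finset.univ.filter (fun l => l ≠ k),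
              (starRingEnd ℂ) (ρ k) * ρ l * ((starRingEnd ℂ) (a k p.1) * a l p.2)))
      = ∑ k : Fin K, ∑ l ∈ Finset.univ.filter (fun l => l ≠ k),
          (starRingEnd ℂ) (ρ k) * ρ l * (A k * B l) := by
    simp only [Finset.mul_sum]
    rw [Finset.sum_comm]
    refine Finset.sum_congr rfl fun k _ => ?_
    rw [Finset.sum_comm]
    refine Finset.sum_congr rfl fun l _ => ?_
    rw [hAdef, hBdef]
    simp only [Finset.mul_sum, Finset.sum_mul, Fintype.sum_prod_type]
    rw [Finset.sum_comm]
    refine Finset.sum_congr rfl fun i _ => ?_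
    refine Finset.sum_congr rfl fun j _ => ?_
    simp only [map_mul, Complex.conj_conj]
    ring
  rw [key]
  set T : Finset (Fin K) := Finset.univ.filter (fun k => ρ k ≠ 0) with hTdef
  have hmT : m ∈ T := by simp [hTdef, hm]
  have hcard : T.card ≤ M := hsparse
  have norm_term : ∀ k l : Fin K, ‖(starRingEnd ℂ) (ρ k) * ρ l * (A k * B l)‖
      ≤ S * S * (g k * g l) := by
    intro k l
    have h1 : ‖(starRingEnd ℂ) (ρ k) * ρ l * (A k * B l)‖
        = ‖ρ k‖ * ‖ρ l‖ * (‖A k‖ * ‖B l‖) := by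
      simp [norm_mul]
    rw [h1]
    have := hA k
    have := hB l
    gcongr
    · exact hS k
    · exact hS l
  have step1 : ‖∑ k : Fin K, ∑ l ∈ Finset.univ.filter (fun l => l ≠ k),
          (starRingEnd ℂ) (ρ k) * ρ l * (A k * B l)‖
      ≤ ∑ k ∈ T, ∑ l ∈ T.erase k, ‖(starRingEnd ℂ) (ρ k) * ρ l * (A k * B l)‖ := by
    refine le_trans (norm_sum_le _ _) ?_
    have inner_eq : ∀ k : Fin K, ∑ l ∈ Finset.univ.filter (fun l => l ≠ k),
          ‖(starRingEnd ℂ) (ρ k) * ρ l * (A k * B l)‖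
        = ∑ l ∈ T.erase k, ‖(starRingEnd ℂ) (ρ k) * ρ l * (A k * B l)‖ := by
      intro k
      refine (Finset.sum_subset ?_ ?_).symm
      · intro l hl
        simp only [Finset.mem_filter, Finset.mem_univ, true_and]
        exact (Finset.mem_erase.mp hl).1
      · intro l hl hl'
        have hlk : l ≠ k := by simpa using hl
        have hρl : ρ l = 0 := by
          by_contra h
          exact hl' (Finset.mem_erase.mpr ⟨hlk, by simp [hTdef, h]⟩)
        simp [hρl]
    calc ∑ k : Fin K, ‖∑ l ∈ Finset.univ.filter (fun l => l ≠ k),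
            (starRingEnd ℂ) (ρ k) * ρ l * (A k * B l)‖
        ≤ ∑ k : Fin K, ∑ l ∈ Finset.univ.filter (fun l => l ≠ k),
            ‖(starRingEnd ℂ) (ρ k) * ρ l * (A k * B l)‖ :=
          Finset.sum_le_sum fun k _ => norm_sum_le _ _
      _ = ∑ k ∈ T, ∑ l ∈ Finset.univ.filter (fun l => l ≠ k),
            ‖(starRingEnd ℂ) (ρ k) * ρ l * (A k * B l)‖ := by
          refine (Finset.sum_subset (Finset.filter_subset _ _) ?_).symm
          intro k _ hk
          have : ρ k = 0 := by simpa [hTdef] using hk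
          simp [this]
      _ = ∑ k ∈ T, ∑ l ∈ T.erase k, ‖(starRingEnd ℂ) (ρ k) * ρ l * (A k * B l)‖ :=
          Finset.sum_congr rfl fun k _ => inner_eq k
  have step2 : ∑ k ∈ T, ∑ l ∈ T.erase k, ‖(starRingEnd ℂ) (ρ k) * ρ l * (A k * B l)‖
      ≤ S * S * ∑ k ∈ T, ∑ l ∈ T.erase k, g k * g l := by
    rw [Finset.mul_sum]
    refine Finset.sum_le_sum fun k _ => ?_
    rw [Finset.mul_sum]
    exact Finset.sum_le_sum fun l _ => norm_term k l
  set G : ℝ := ∑ k ∈ T, g k with hGdef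
  have hGle : G ≤ 1 + M * D := by
    rw [hGdef, ← Finset.sum_erase_add T g hmT]
    have h1 : ∑ k ∈ T.erase m, g k = (T.erase m).card * D := by
      rw [Finset.sum_congr rfl (fun k hk => ?_), Finset.sum_const, nsmul_eq_mul]
      simp [hgdef, (Finset.mem_erase.mp hk).1]
    rw [h1]
    have h2 : ((T.erase m).card : ℝ) ≤ M := by
      have := Finset.card_erase_le (a := m) (s := T)
      exact_mod_cast le_trans this hcard
    have : ((T.erase m).card : ℝ) * D ≤ M * D := mul_le_mul_of_nonneg_right h2 hD
    simp [hgdef]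
    linarith
  have hG0 : 0 ≤ G := Finset.sum_nonneg fun k _ => hg0 k
  have hsum_g : ∑ k ∈ T, ∑ l ∈ T.erase k, g k * g l = G * G - ∑ k ∈ T, g k * g k := by
    rw [hGdef, Finset.sum_mul_sum, ← Finset.sum_sub_distrib]
    refine Finset.sum_congr rfl fun k hk => ?_
    rw [← Finset.mul_sum, ← Finset.mul_sum, Finset.sum_erase_eq_sub hk]
    ring
  have hdiag : (1 : ℝ) ≤ ∑ k ∈ T, g k * g k := by
    have := Finset.single_le_sum (f := fun k => g k * g k)
      (fun k _ => mul_nonneg (hg0 k) (hg0 k)) hmT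
    simpa [hgdef] using this
  have hgsum_le : ∑ k ∈ T, ∑ l ∈ T.erase k, g k * g l
      ≤ 2 * M * D + (M : ℝ) ^ 2 * D ^ 2 := by
    rw [hsum_g]
    have hGG : G * G ≤ (1 + M * D) * (1 + M * D) :=
      mul_le_mul hGle hGle hG0 (by positivity)
    nlinarith
  have hDval : 2 * M * D + (M : ℝ) ^ 2 * D ^ 2
      = 2 * Δ * M / Real.sqrt N + Δ ^ 2 * M ^ 2 / N := by
    have hNs : Real.sqrt N ^ 2 = (N : ℝ) := Real.sq_sqrt (Nat.cast_nonneg N)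
    rw [hDdef, div_pow, hNs]
    ring
  calc ‖∑ k : Fin K, ∑ l ∈ Finset.univ.filter (fun l => l ≠ k),
          (starRingEnd ℂ) (ρ k) * ρ l * (A k * B l)‖
      ≤ S * S * ∑ k ∈ T, ∑ l ∈ T.erase k, g k * g l := le_trans step1 step2
    _ ≤ S * S * (2 * M * D + (M : ℝ) ^ 2 * D ^ 2) :=
        mul_le_mul_of_nonneg_left hgsum_le (mul_nonneg hS0 hS0)
    _ = (2 * Δ * M / Real.sqrt N + Δ ^ 2 * M ^ 2 / N) * S ^ 2 := by
        rw [hDval]; ring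
end
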